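/- Given the parametrization J(h,λ) = N diag(Eλ) Yᵀ diag(h) with convex parameters (h,λ), h ∈ ℝⁿ₊, λ ∈ ℝˡ≥0, Eλ ∈ ℝʳ₊, the converse construction holds: setting x* = 1/h (componentwise) and κ = diag(ψ(h)) E λ yields κ ∈ ℝʳ₊, x* is a positive steady state of ẋ = N diag(κ)ψ(x), and the Jacobian of N diag(κ)ψ(x) at x* equals J(h,λ). -/

import Mathlib

open Matrix

/-- Converse construction: given convex parameters `(h, λ)` with `h > 0`, `λ ≥ 0`,
`Eλ > 0`, and `E` with columns in the kernel of `N`, setting `x* = 1/h` and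
`κ = diag(ψ(h)) E λ` yields positive rate constants, a positive steady state `x*` of
`ẋ = N diag(κ) ψ(x)`, and Jacobian `N diag(Eλ) Yᵀ diag(h)` at `x*`. -/
theorem convex_parameters_realize_jacobian
    (n r l : ℕ)
    (N : Matrix (Fin n) (Fin r) ℝ)
    (Y : Matrix (Fin n) (Fin r) ℕ)
    (E : Matrix (Fin r) (Fin l) ℝ)
    (hNE : N * E = 0)
    (h : Fin n → ℝ) (hh : ∀ i, 0 < h i)
    (lam : Fin l → ℝ) (hlam : ∀ i, 0 ≤ lam i)
    (hpos : ∀ j, 0 < E.mulVec lam j)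
    (xstar : Fin n → ℝ) (hx : xstar = fun i => (h i)⁻¹)
    (κ : Fin r → ℝ) (hκ : κ = fun j => (∏ i, h i ^ Y i j) * E.mulVec lam j)
    (f : (Fin n → ℝ) → (Fin n → ℝ))
    (hf : f = fun x => N.mulVec (fun j => κ j * ∏ i, x i ^ Y i j)) :
    (∀ j, 0 < κ j) ∧ (∀ i, 0 < xstar i) ∧ f xstar = 0 ∧
      ∀ u : Fin n → ℝ,
        fderiv ℝ f xstar u =
          (N * Matrix.diagonal (E.mulVec lam) * (Y.map (fun m => (m : ℝ)))ᵀ *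
            Matrix.diagonal h).mulVec u := by
  have hκpos : ∀ j, 0 < κ j := by
    intro j; rw [hκ]
    exact mul_pos (Finset.prod_pos fun i _ => pow_pos (hh i) _) (hpos j)
  have hxpos : ∀ i, 0 < xstar i := by
    intro i; rw [hx]; exact inv_pos.mpr (hh i)
  -- key identity
  have key : ∀ j, κ j * ∏ i, xstar i ^ Y i j = E.mulVec lam j := by
    intro j
    have hprodne : (∏ i, h i ^ Y i j) ≠ 0 :=
      (Finset.prod_pos fun i _ => pow_pos (hh i) _).ne'
    have hpi : ∏ i, xstar i ^ Y i j = (∏ i, h i ^ Y i j)⁻¹ := by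
      rw [hx, ← Finset.prod_inv_distrib]
      exact Finset.prod_congr rfl fun i _ => inv_pow (h i) (Y i j)
    rw [hκ, hpi]
    field_simp
  have hsteady : f xstar = 0 := by
    rw [hf]
    show N.mulVec (fun j => κ j * ∏ i, xstar i ^ Y i j) = 0
    rw [funext key, Matrix.mulVec_mulVec, hNE, Matrix.zero_mulVec]
  refine ⟨hκpos, hxpos, hsteady, ?_⟩
  -- derivative of each monomial
  set g : Fin r → (Fin n → ℝ) → ℝ := fun j x => κ j * ∏ i, x i ^ Y i j with hg
  set D : Fin r → ((Fin n → ℝ) →L[ℝ] ℝ) := fun j =>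
    κ j • ∑ k, (∏ m ∈ Finset.univ.erase k, xstar m ^ Y m j) •
      (((Y k j : ℝ) * xstar k ^ (Y k j - 1)) •
        (ContinuousLinearMap.proj k : (Fin n → ℝ) →L[ℝ] ℝ)) with hD
  have hgD : ∀ j, HasFDerivAt (g j) (D j) xstar := by
    intro j
    have hprod : HasFDerivAt (fun x : Fin n → ℝ => ∏ k, x k ^ Y k j)
        (∑ k, (∏ m ∈ Finset.univ.erase k, xstar m ^ Y m j) •
          (((Y k j : ℝ) * xstar k ^ (Y k j - 1)) •
            (ContinuousLinearMap.proj k : (Fin n → ℝ) →L[ℝ] ℝ))) xstar := by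
      exact HasFDerivAt.finset_prod fun k _ =>
        (hasDerivAt_pow (Y k j) (xstar k)).comp_hasFDerivAt xstar (hasFDerivAt_apply k xstar)
    exact hprod.const_mul (κ j)
  set L : (Fin r → ℝ) →L[ℝ] (Fin n → ℝ) :=
    LinearMap.toContinuousLinearMap (Matrix.mulVecLin N) with hL
  have hG : HasFDerivAt (fun x j => g j x) (ContinuousLinearMap.pi D) xstar :=
    hasFDerivAt_pi.2 hgD
  have hfd : HasFDerivAt f (L.comp (ContinuousLinearMap.pi D)) xstar := by
    have := (L.hasFDerivAt.comp xstar hG)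
    rw [hf]; exact this
  intro u
  rw [hfd.fderiv]
  -- compute both sides entrywise
  have hDu : ∀ j, D j u = E.mulVec lam j * ∑ k, (Y k j : ℝ) * (h k * u k) := by
    intro j
    have hterm : ∀ k, κ j * ((∏ m ∈ Finset.univ.erase k, xstar m ^ Y m j) *
        ((Y k j : ℝ) * xstar k ^ (Y k j - 1) * u k)) =
        E.mulVec lam j * ((Y k j : ℝ) * (h k * u k)) := by
      intro k
      rcases Nat.eq_zero_or_pos (Y k j) with h0 | hposk
      · simp [h0]
      · have hk : xstar k ≠ 0 := (hxpos k).ne'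
        have hx1 : (∏ m ∈ Finset.univ.erase k, xstar m ^ Y m j) * xstar k ^ (Y k j - 1)
            = (∏ m, xstar m ^ Y m j) * (xstar k)⁻¹ := by
          have : (∏ m, xstar m ^ Y m j)
              = xstar k ^ Y k j * ∏ m ∈ Finset.univ.erase k, xstar m ^ Y m j :=
            (Finset.mul_prod_erase Finset.univ _ (Finset.mem_univ k)).symm
          rw [this]
          have hp : xstar k ^ Y k j = xstar k ^ (Y k j - 1) * xstar k := by
            rw [← pow_succ, Nat.sub_add_cancel hposk]
          rw [hp]; field_simp
        have hinv : (xstar k)⁻¹ = h k := by rw [hx]; simp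
        calc κ j * ((∏ m ∈ Finset.univ.erase k, xstar m ^ Y m j) *
              ((Y k j : ℝ) * xstar k ^ (Y k j - 1) * u k))
            = (κ j * ∏ m, xstar m ^ Y m j) * ((xstar k)⁻¹ * ((Y k j : ℝ) * u k)) := by
              rw [mul_comm ((Y k j : ℝ)) (xstar k ^ (Y k j - 1))]
              rw [show (∏ m ∈ Finset.univ.erase k, xstar m ^ Y m j) *
                  (xstar k ^ (Y k j - 1) * (Y k j : ℝ) * u k)
                  = ((∏ m ∈ Finset.univ.erase k, xstar m ^ Y m j) * xstar k ^ (Y k j - 1))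
                    * ((Y k j : ℝ) * u k) by ring, hx1]
              ring
          _ = E.mulVec lam j * ((Y k j : ℝ) * (h k * u k)) := by
              rw [key j, hinv]; ring
    simp only [hD, ContinuousLinearMap.smul_apply, ContinuousLinearMap.sum_apply,
      ContinuousLinearMap.proj_apply, smul_eq_mul, Finset.mul_sum]
    exact Finset.sum_congr rfl fun k _ => hterm k
  have hLHS : (L.comp (ContinuousLinearMap.pi D)) u = N.mulVec (fun j => D j u) := rfl
  have hvec : (fun j => D j u) =
      (Matrix.diagonal (E.mulVec lam) * ((Y.map (fun m => (m : ℝ)))ᵀ *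
        Matrix.diagonal h)).mulVec u := by
    funext j
    rw [hDu j, ← Matrix.mulVec_mulVec, ← Matrix.mulVec_mulVec, Matrix.mulVec_diagonal]
    congr 1
    simp only [Matrix.mulVec, dotProduct, Matrix.transpose_apply, Matrix.map_apply,
      Matrix.mulVec_diagonal]
    refine Finset.sum_congr rfl fun k _ => ?_
    have hd : ∑ x, Matrix.diagonal h k x * u x = h k * u k := by
      simp [Matrix.diagonal_apply, ite_mul]
    rw [hd]
  rw [hLHS, hvec, Matrix.mulVec_mulVec, ← Matrix.mul_assoc, ← Matrix.mul_assoc]
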